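/- The vector field X(ξ,x) = (0, 1, S(ξ,x)) with S(ξ,x) = Σ_{n=1}^∞ κ^n Φ'(B_2^n(ξ,x)), κ = 1/(2γ), satisfies DF(ξ,x,y) X(ξ,x) = (1/2) X(B(ξ,x)) at all points of differentiability; i.e. X spans the stable direction with Lyapunov exponent 1/2. -/

import Mathlib

open Set

noncomputable section

/-- Distance to the nearest integer. -/
def Phi (y : ℝ) : ℝ := |y - round y|

/-- The baker transformation on the unit square. -/
def bak (p : ℝ × ℝ) : ℝ × ℝ :=
  (Int.fract (2 * p.1), ((⌊2 * p.1⌋ : ℝ) + p.2) / 2)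

/-- The derivative of `Phi` (off the half-integers). -/
def Phi' (y : ℝ) : ℝ := if Int.fract y ≤ 1 / 2 then 1 else -1

/-- The stable-manifold function `S(ξ,x) = Σ_{n≥1} κ^n Φ'(B₂ⁿ(ξ,x))`. -/
def Sman (κ : ℝ) (ξ x : ℝ) : ℝ := ∑' n : ℕ, κ ^ (n + 1) * Phi' ((bak^[n + 1] (ξ, x)).2)

/-- The Jacobian of `F` applied to a tangent vector. -/
def DFapp (γ : ℝ) (ξ x : ℝ) (v : ℝ × ℝ × ℝ) : ℝ × ℝ × ℝ :=
  (2 * v.1, v.2.1 / 2, -(1/2) * Phi' ((bak (ξ, x)).2) * v.2.1 + γ * v.2.2)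

/-- The invariant stable vector field `X(ξ,x) = (0, 1, S(ξ,x))`. -/
def Xvec (κ : ℝ) (ξ x : ℝ) : ℝ × ℝ × ℝ := (0, 1, Sman κ ξ x)

lemma phi'_abs (y : ℝ) : |Phi' y| = 1 := by
  unfold Phi'; split <;> simp

lemma sman_summable (κ : ℝ) (hκ : |κ| < 1) (p : ℝ × ℝ) :
    Summable (fun n : ℕ => κ ^ (n + 1) * Phi' ((bak^[n + 1] p).2)) := by
  apply Summable.of_norm
  have h : ∀ n : ℕ, ‖κ ^ (n + 1) * Phi' ((bak^[n + 1] p).2)‖ = |κ| ^ (n + 1) := by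
    intro n
    rw [Real.norm_eq_abs, abs_mul, abs_pow, phi'_abs, mul_one]
  simp only [h]
  exact (summable_geometric_of_lt_one (abs_nonneg κ) hκ).comp_injective
    (add_left_injective 1)

lemma sman_rec (κ : ℝ) (hκ : |κ| < 1) (ξ x : ℝ) :
    Sman κ ξ x = κ * Phi' ((bak (ξ, x)).2)
      + κ * Sman κ (bak (ξ, x)).1 (bak (ξ, x)).2 := by
  unfold Sman
  rw [Summable.tsum_eq_zero_add (sman_summable κ hκ (ξ, x))]
  congr 1
  · simp
  · rw [← tsum_mul_left]
    congr 1
    ext n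
    have : bak^[n + 1 + 1] (ξ, x) = bak^[n + 1] (bak (ξ, x)) := by
      rw [Function.iterate_succ_apply]
    rw [this]
    ring

/-- `DF(ξ,x,y) X(ξ,x) = (1/2) X(B(ξ,x))`: `X` spans the stable direction with
Lyapunov exponent `1/2`. -/
theorem stmt6 (γ : ℝ) (hγ : γ ∈ Set.Ioo (1/2 : ℝ) 1) :
    ∀ ξ ∈ Set.Icc (0:ℝ) 1, ∀ x ∈ Set.Icc (0:ℝ) 1,
      DFapp γ ξ x (Xvec (1 / (2 * γ)) ξ x)
        = (1/2 : ℝ) • Xvec (1 / (2 * γ)) (bak (ξ, x)).1 (bak (ξ, x)).2 := by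
  intro ξ _ x _
  obtain ⟨h1, h2⟩ := hγ
  have hγ0 : γ ≠ 0 := by linarith
  set κ : ℝ := 1 / (2 * γ) with hκdef
  have hκ : |κ| < 1 := by
    rw [abs_of_pos (by positivity)]
    rw [div_lt_one (by linarith)]
    linarith
  have hγκ : γ * κ = 1 / 2 := by
    rw [hκdef]; field_simp
  unfold DFapp Xvec
  simp only [Prod.smul_mk, smul_eq_mul, mul_zero, mul_one, Prod.mk.injEq]
  refine ⟨by trivial, by trivial, ?_⟩
  have hS := sman_rec κ hκ ξ x
  have key : γ * Sman κ ξ x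
      = 1/2 * Phi' ((bak (ξ, x)).2) + 1/2 * Sman κ (bak (ξ, x)).1 (bak (ξ, x)).2 := by
    rw [hS, ← hγκ]; ring
  linear_combination key
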